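/- Matrix Hölder inequality for matrix-valued measures: let μ be a positive semidefinite matrix-valued measure on X with trace measure τ_μ and Radon–Nikodym matrix density M_μ (so dμ = M_μ dτ_μ, M_μ(z) positive semidefinite τ_μ-a.e.). For 1 < p < ∞ with conjugate exponent q and measurable ℂ^d-valued functions f, g, one has |∫_X ⟨M_μ(w)f(w), g(w)⟩ dτ_μ(w)| ≤ (∫_X ‖M_μ^{1/p}(w)f(w)‖^p dτ_μ(w))^{1/p} · (∫_X ‖M_μ^{1/q}(w)g(w)‖^q dτ_μ(w))^{1/q}. -/

import Mathlib

set_option autoImplicit false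

open MeasureTheory ComplexOrder

noncomputable section

/-- The inner product `⟨v, w⟩ = ∑ vᵢ conj(wᵢ)` on `ℂ^d`. -/
def einner {d : ℕ} (v w : Fin d → ℂ) : ℂ := ∑ i, v i * (starRingEnd ℂ) (w i)

/-- The Euclidean norm on `ℂ^d`. -/
def enorm2 {d : ℕ} (v : Fin d → ℂ) : ℝ := Real.sqrt (∑ i, ‖v i‖ ^ 2)

/-- `SpectralPow A r B` : `B = A^r` via a spectral decomposition of the
positive semidefinite matrix `A`. -/
def SpectralPow {d : ℕ} (A : Matrix (Fin d) (Fin d) ℂ) (r : ℝ)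
    (B : Matrix (Fin d) (Fin d) ℂ) : Prop :=
  ∃ (U : Matrix (Fin d) (Fin d) ℂ) (lam : Fin d → ℝ),
    star U * U = 1 ∧ U * star U = 1 ∧ (∀ i, 0 ≤ lam i) ∧
    A = star U * Matrix.diagonal (fun i => ((lam i : ℂ))) * U ∧
    B = star U * Matrix.diagonal (fun i => ((lam i ^ r : ℝ) : ℂ)) * U

/-- Cauchy–Schwarz for `einner`/`enorm2`. -/
lemma einner_le_enorm2_mul_enorm2 {d : ℕ} (v w : Fin d → ℂ) :
    ‖einner v w‖ ≤ enorm2 v * enorm2 w := by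
  have h1 : ‖einner v w‖ ≤ ∑ i, ‖v i‖ * ‖w i‖ := by
    refine (norm_sum_le _ _).trans ?_
    refine Finset.sum_le_sum fun i _ => ?_
    rw [norm_mul, RingHomIsometric.norm_map]
  refine h1.trans ?_
  have h2 := Finset.sum_mul_sq_le_sq_mul_sq Finset.univ (fun i => ‖v i‖) (fun i => ‖w i‖)
  have h3 : (0:ℝ) ≤ ∑ i, ‖v i‖ * ‖w i‖ :=
    Finset.sum_nonneg fun i _ => mul_nonneg (norm_nonneg _) (norm_nonneg _)
  have := Real.sqrt_le_sqrt h2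
  rw [Real.sqrt_sq h3, Real.sqrt_mul (Finset.sum_nonneg fun i _ => sq_nonneg _)] at this
  exact this

/-- Move a Hermitian matrix across `einner`. -/
lemma einner_mulVec_hermitian {d : ℕ} {N : Matrix (Fin d) (Fin d) ℂ}
    (hN : N.IsHermitian) (v w : Fin d → ℂ) :
    einner (N.mulVec v) w = einner v (N.mulVec w) := by
  simp only [einner, Matrix.mulVec, dotProduct, Finset.sum_mul, Finset.mul_sum, map_sum,
    map_mul]
  rw [Finset.sum_comm]
  refine Finset.sum_congr rfl fun j _ => Finset.sum_congr rfl fun i _ => ?_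
  have h : (starRingEnd ℂ) (N j i) = N i j := by
    exact hN.apply i j
  rw [h]
  ring

lemma hermitian_conj_diag {d : ℕ} (U : Matrix (Fin d) (Fin d) ℂ) (v : Fin d → ℝ) :
    (star U * Matrix.diagonal (fun i => ((v i : ℝ) : ℂ)) * U).IsHermitian := by
  have hD : (Matrix.diagonal (fun i => ((v i : ℝ) : ℂ))).IsHermitian := by
    rw [Matrix.IsHermitian, Matrix.diagonal_conjTranspose]
    congr 1
    funext i
    simp [Pi.star_def, Complex.conj_ofReal]
  rw [Matrix.star_eq_conjTranspose]
  unfold Matrix.IsHermitian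
  rw [Matrix.conjTranspose_mul, Matrix.conjTranspose_mul, Matrix.conjTranspose_conjTranspose,
    hD, Matrix.mul_assoc]

/-- Uniqueness of spectral powers. -/
lemma spectralPow_unique {d : ℕ} {A B C : Matrix (Fin d) (Fin d) ℂ} {r : ℝ}
    (hB : SpectralPow A r B) (hC : SpectralPow A r C) : B = C := by
  obtain ⟨U, lam, hU1, hU2, hlam, hAU, hBU⟩ := hB
  obtain ⟨V, mu, hV1, hV2, hmu, hAV, hCV⟩ := hC
  set W : Matrix (Fin d) (Fin d) ℂ := V * star U with hW
  have key : W * Matrix.diagonal (fun i => ((lam i : ℝ) : ℂ)) =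
      Matrix.diagonal (fun i => ((mu i : ℝ) : ℂ)) * W := by
    have h0 : V * A * star U = V * A * star U := rfl
    calc W * Matrix.diagonal (fun i => ((lam i : ℝ) : ℂ))
        = V * star U * Matrix.diagonal (fun i => ((lam i : ℝ) : ℂ)) * (U * star U) := by
          rw [hU2, mul_one]
      _ = V * A * star U := by rw [hAU]; noncomm_ring
      _ = (V * star V) * Matrix.diagonal (fun i => ((mu i : ℝ) : ℂ)) * (V * star U) := by
          rw [hAV]; noncomm_ring
      _ = Matrix.diagonal (fun i => ((mu i : ℝ) : ℂ)) * W := by rw [hV2, one_mul]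
  have hent : ∀ i j, W i j * ((lam j : ℝ) : ℂ) = ((mu i : ℝ) : ℂ) * W i j := by
    intro i j
    have := Matrix.ext_iff.mpr key i j
    simpa [Matrix.mul_diagonal, Matrix.diagonal_mul] using this
  have hent' : ∀ i j, W i j * ((lam j ^ r : ℝ) : ℂ) = ((mu i ^ r : ℝ) : ℂ) * W i j := by
    intro i j
    by_cases h : W i j = 0
    · simp [h]
    · have h1 : ((lam j : ℝ) : ℂ) = ((mu i : ℝ) : ℂ) := by
        have h2 := hent i j
        rw [mul_comm ((mu i : ℝ) : ℂ) (W i j)] at h2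
        exact mul_left_cancel₀ h h2
      have h3 : lam j = mu i := by exact_mod_cast h1
      rw [h3, mul_comm]
  have key' : W * Matrix.diagonal (fun i => ((lam i ^ r : ℝ) : ℂ)) =
      Matrix.diagonal (fun i => ((mu i ^ r : ℝ) : ℂ)) * W := by
    ext i j
    rw [Matrix.mul_diagonal, Matrix.diagonal_mul]
    exact hent' i j
  rw [hBU, hCV]
  calc star U * Matrix.diagonal (fun i => ((lam i ^ r : ℝ) : ℂ)) * U
      = star V * (W * Matrix.diagonal (fun i => ((lam i ^ r : ℝ) : ℂ))) * U := by
        rw [hW]; rw [← Matrix.mul_assoc, ← Matrix.mul_assoc, hV1, one_mul]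
    _ = star V * (Matrix.diagonal (fun i => ((mu i ^ r : ℝ) : ℂ)) * W) * U := by rw [key']
    _ = star V * Matrix.diagonal (fun i => ((mu i ^ r : ℝ) : ℂ)) * (V * (star U * U)) := by
        rw [hW]; noncomm_ring
    _ = star V * Matrix.diagonal (fun i => ((mu i ^ r : ℝ) : ℂ)) * V := by
        rw [hU1, mul_one]

/-- Pointwise matrix Cauchy–Schwarz bound. -/
lemma pointwise_bound {d : ℕ} {A Ap Aq : Matrix (Fin d) (Fin d) ℂ} {p q : ℝ}
    (hp : 1 < p) (hpq : 1 / p + 1 / q = 1)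
    (hAp : SpectralPow A (1 / p) Ap) (hAq : SpectralPow A (1 / q) Aq)
    (v w : Fin d → ℂ) :
    ‖einner (A.mulVec v) w‖ ≤ enorm2 (Ap.mulVec v) * enorm2 (Aq.mulVec w) := by
  obtain ⟨U, lam, hU1, hU2, hlam, hAU, hApU⟩ := hAp
  set N : Matrix (Fin d) (Fin d) ℂ :=
    star U * Matrix.diagonal (fun i => ((lam i ^ (1 / q) : ℝ) : ℂ)) * U with hNdef
  have hNq : SpectralPow A (1 / q) N := ⟨U, lam, hU1, hU2, hlam, hAU, rfl⟩
  have hNeq : N = Aq := spectralPow_unique hNq hAq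
  have hNH : N.IsHermitian := hermitian_conj_diag U _
  have hfac : A = N * Ap := by
    rw [hNdef, hApU, hAU]
    have : star U * Matrix.diagonal (fun i => ((lam i ^ (1 / q) : ℝ) : ℂ)) * U *
        (star U * Matrix.diagonal (fun i => ((lam i ^ (1 / p) : ℝ) : ℂ)) * U) =
        star U * (Matrix.diagonal (fun i => ((lam i ^ (1 / q) : ℝ) : ℂ)) *
          Matrix.diagonal (fun i => ((lam i ^ (1 / p) : ℝ) : ℂ))) * U := by
      rw [Matrix.mul_assoc (star U * Matrix.diagonal fun i => ((lam i ^ (1 / q) : ℝ) : ℂ))]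
      rw [show U * (star U * Matrix.diagonal (fun i => ((lam i ^ (1 / p) : ℝ) : ℂ)) * U) =
          (U * star U) * Matrix.diagonal (fun i => ((lam i ^ (1 / p) : ℝ) : ℂ)) * U by
        noncomm_ring]
      rw [hU2, one_mul]
      noncomm_ring
    rw [this, Matrix.diagonal_mul_diagonal]
    have hfun : (fun i => ((lam i : ℝ) : ℂ)) =
        fun i => ((lam i ^ (1 / q) : ℝ) : ℂ) * ((lam i ^ (1 / p) : ℝ) : ℂ) := by
      funext i
      have hsum : 1 / q + 1 / p = 1 := by linarith
      have h5 : lam i ^ (1 / q) * lam i ^ (1 / p) = lam i := by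
        rw [← Real.rpow_add' (hlam i) (by rw [hsum]; norm_num), hsum, Real.rpow_one]
      rw [← Complex.ofReal_mul, h5]
    rw [hfun]
  rw [hfac, ← Matrix.mulVec_mulVec, einner_mulVec_hermitian hNH, hNeq]
  exact einner_le_enorm2_mul_enorm2 _ _

/-- Matrix Hölder inequality for matrix-valued measures.  Here `τ` plays the
role of the trace measure `τ_μ`, `M` is the Radon–Nikodym matrix density
(`dμ = M dτ`, positive semidefinite a.e.), and `Mp`, `Mq` are the positive
semidefinite roots `M^{1/p}`, `M^{1/q}`.  For conjugate exponents
`1 < p, q < ∞` and `ℂ^d`-valued `f, g`: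
`|∫ ⟨M f, g⟩ dτ| ≤ (∫ ‖M^{1/p} f‖^p dτ)^{1/p} (∫ ‖M^{1/q} g‖^q dτ)^{1/q}`. -/
theorem matrix_holder_inequality
    (d : ℕ) (X : Type*) [MeasurableSpace X] (τ : Measure X)
    (M Mp Mq : X → Matrix (Fin d) (Fin d) ℂ)
    (p q : ℝ) (hp : 1 < p) (hpq : 1 / p + 1 / q = 1)
    (hM : ∀ᵐ w ∂τ, (M w).PosSemidef)
    (hMp : ∀ᵐ w ∂τ, (Mp w).PosSemidef ∧ SpectralPow (M w) (1 / p) (Mp w))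
    (hMq : ∀ᵐ w ∂τ, (Mq w).PosSemidef ∧ SpectralPow (M w) (1 / q) (Mq w))
    (f g : X → Fin d → ℂ)
    (hint : Integrable (fun w => einner ((M w).mulVec (f w)) (g w)) τ)
    (hintf : Integrable (fun w => enorm2 ((Mp w).mulVec (f w)) ^ p) τ)
    (hintg : Integrable (fun w => enorm2 ((Mq w).mulVec (g w)) ^ q) τ) :
    ‖∫ w, einner ((M w).mulVec (f w)) (g w) ∂τ‖ ≤
      (∫ w, enorm2 ((Mp w).mulVec (f w)) ^ p ∂τ) ^ (1 / p) *
        (∫ w, enorm2 ((Mq w).mulVec (g w)) ^ q ∂τ) ^ (1 / q) := by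
  have hpq' : Real.HolderConjugate p q := Real.holderConjugate_iff.mpr ⟨hp, by rw [← one_div, ← one_div]; exact hpq⟩
  have hq : 1 < q := hpq'.symm.lt
  have hppos : (0:ℝ) < p := lt_trans one_pos hp
  have hqpos : (0:ℝ) < q := lt_trans one_pos hq
  set F : X → ℝ := fun w => enorm2 ((Mp w).mulVec (f w)) with hF
  set G : X → ℝ := fun w => enorm2 ((Mq w).mulVec (g w)) with hG
  have hFnn : ∀ w, 0 ≤ F w := fun w => Real.sqrt_nonneg _
  have hGnn : ∀ w, 0 ≤ G w := fun w => Real.sqrt_nonneg _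
  -- measurability of F and G
  have hFm : AEMeasurable F τ := by
    have h1 : AEMeasurable (fun w => F w ^ p) τ := hintf.aemeasurable
    have h2 := h1.pow_const p⁻¹
    have h3 : (fun w => (F w ^ p) ^ p⁻¹) = F := by
      funext w
      exact Real.rpow_rpow_inv (hFnn w) hppos.ne'
    rwa [h3] at h2
  have hGm : AEMeasurable G τ := by
    have h1 : AEMeasurable (fun w => G w ^ q) τ := hintg.aemeasurable
    have h2 := h1.pow_const q⁻¹
    have h3 : (fun w => (G w ^ q) ^ q⁻¹) = G := by
      funext w
      exact Real.rpow_rpow_inv (hGnn w) hqpos.ne'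
    rwa [h3] at h2
  have hpne0 : ENNReal.ofReal p ≠ 0 := by
    simp only [ne_eq, ENNReal.ofReal_eq_zero, not_le]; exact hppos
  have hqne0 : ENNReal.ofReal q ≠ 0 := by
    simp only [ne_eq, ENNReal.ofReal_eq_zero, not_le]; exact hqpos
  -- Memℒp statements
  have memF : MemLp F (ENNReal.ofReal p) τ := by
    refine (memLp_norm_rpow_iff (q := ENNReal.ofReal p) hFm.aestronglyMeasurable hpne0
      ENNReal.ofReal_ne_top).mp ?_
    rw [ENNReal.div_self hpne0 ENNReal.ofReal_ne_top, memLp_one_iff_integrable]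
    have : (fun x => ‖F x‖ ^ (ENNReal.ofReal p).toReal) = fun w => F w ^ p := by
      funext w
      rw [ENNReal.toReal_ofReal hppos.le, Real.norm_of_nonneg (hFnn w)]
    rwa [this]
  have memG : MemLp G (ENNReal.ofReal q) τ := by
    refine (memLp_norm_rpow_iff (q := ENNReal.ofReal q) hGm.aestronglyMeasurable hqne0
      ENNReal.ofReal_ne_top).mp ?_
    rw [ENNReal.div_self hqne0 ENNReal.ofReal_ne_top, memLp_one_iff_integrable]
    have : (fun x => ‖G x‖ ^ (ENNReal.ofReal q).toReal) = fun w => G w ^ q := by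
      funext w
      rw [ENNReal.toReal_ofReal hqpos.le, Real.norm_of_nonneg (hGnn w)]
    rwa [this]
  -- F * G is integrable
  have hFG : Integrable (fun w => F w * G w) τ := by
    have hsum : (1 : ENNReal) / 1 = 1 / ENNReal.ofReal p + 1 / ENNReal.ofReal q := by
      rw [one_div, one_div, one_div, inv_one, ← ENNReal.ofReal_inv_of_pos hppos,
        ← ENNReal.ofReal_inv_of_pos hqpos, ← ENNReal.ofReal_add (by positivity) (by positivity)]
      rw [← one_div, ← one_div, hpq, ENNReal.ofReal_one]
    haveI : ENNReal.HolderTriple (ENNReal.ofReal p) (ENNReal.ofReal q) 1 :=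
      ⟨by simpa [one_div] using hsum.symm⟩
    have := (memG.smul (φ := F) (r := 1) memF)
    rw [memLp_one_iff_integrable] at this
    exact this
  -- pointwise bound
  have hb : ∀ᵐ w ∂τ, ‖einner ((M w).mulVec (f w)) (g w)‖ ≤ F w * G w := by
    filter_upwards [hMp, hMq] with w h1 h2
    exact pointwise_bound hp hpq h1.2 h2.2 (f w) (g w)
  calc ‖∫ w, einner ((M w).mulVec (f w)) (g w) ∂τ‖
      ≤ ∫ w, ‖einner ((M w).mulVec (f w)) (g w)‖ ∂τ := norm_integral_le_integral_norm _
    _ ≤ ∫ w, F w * G w ∂τ := integral_mono_ae hint.norm hFG hb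
    _ ≤ (∫ w, F w ^ p ∂τ) ^ (1 / p) * (∫ w, G w ^ q ∂τ) ^ (1 / q) :=
        integral_mul_le_Lp_mul_Lq_of_nonneg hpq'
          (Filter.Eventually.of_forall hFnn) (Filter.Eventually.of_forall hGnn) memF memG
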